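/- Let S ∈ B(ℓ²(T)) admit a pointwise absolutely convergent representation S = Σ′_{w_1,w_2} w_1* w_2 S_{w_1,w_2} over irreducible pairs, with diagonal coefficients S_{w_1,w_2} normalized so that S_{w_1,w_2}χ_r = 0 for r ∉ T·w_2. Then S is causal if and only if S_{w_1,w_2} = 0 whenever |w_1| < |w_2|. -/

import Mathlib

open scoped InnerProductSpace ENNReal
open ContinuousLinearMap (adjoint)

noncomputable section

namespace Multiscale

/-- A homogeneous tree of order `q` with a distinguished boundary point `∞`,
encoded by the `q` primitive shift maps (the right action `t ↦ t·αⱼ`, giving the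
`q` successors of a node) together with the parent map (the first step of the
unique path from a node towards the boundary point `∞`).  The axioms say:
the shifts are jointly injective, `t·αⱼ` has parent `t`, every node is a
successor of its parent, the parent map has no cycles (acyclicity of the tree)
and the paths from any two nodes to `∞` eventually merge (connectedness and the
choice of one common boundary point). -/
structure HomTree (q : ℕ) (T : Type) where
  shift : Fin q → T → T
  parent : T → T
  shift_inj : ∀ i j s t, shift i s = shift j t → i = j ∧ s = t
  parent_shift : ∀ j t, parent (shift j t) = t
  shift_parent : ∀ t, ∃ j, shift j (parent t) = t
  acyclic : ∀ t n, parent^[n] t = t → n = 0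
  connected : ∀ s t, ∃ m n, parent^[m] s = parent^[n] t

variable {q : ℕ} {T : Type} [DecidableEq T]

/-- The partial order `s ⪯ t` induced by the boundary point:
`dist(s, s ∧ t) ≤ dist(t, s ∧ t)`. -/
def HomTree.ple (S : HomTree q T) (s t : T) : Prop :=
  ∃ m n, m ≤ n ∧ S.parent^[m] s = S.parent^[n] t

/-- The horocycle equivalence `s ≍ t` : `dist(s, s ∧ t) = dist(t, s ∧ t)`. -/
def HomTree.horo (S : HomTree q T) (s t : T) : Prop :=
  ∃ n, S.parent^[n] s = S.parent^[n] t

/-- The right action `t ↦ t·w` of a word `w ∈ F_q` on the tree. -/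
def HomTree.act (S : HomTree q T) : List (Fin q) → T → T
  | [], t => t
  | i :: w, t => S.act w (S.shift i t)

/-- `ℓ²(T)`. -/
abbrev L2 (T : Type) : Type := lp (fun _ : T => ℂ) 2

/-- The operator on `ℓ²` associated with a word `w ∈ F_q`, built from the
operators of the primitive shifts: `(w f)(t) = f(t·w)`. -/
def wordOp {q : ℕ} {H : Type} [NormedAddCommGroup H] [NormedSpace ℂ H]
    (A : Fin q → (H →L[ℂ] H)) : List (Fin q) → (H →L[ℂ] H)
  | [] => 1
  | i :: w => A i ∘L wordOp A w

/-- A bounded operator on `ℓ²(T)` is causal if whenever `f` vanishes on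
`{t : t ⪯ s}` so does `Xf`. -/
def Causal (S : HomTree q T) (X : L2 T →L[ℂ] L2 T) : Prop :=
  ∀ s : T, ∀ f : L2 T, (∀ t, S.ple t s → f t = 0) → ∀ t, S.ple t s → X f t = 0

/-- A constant: both `X` and `X*` are causal. -/
def IsConst (S : HomTree q T) (X : L2 T →L[ℂ] L2 T) : Prop :=
  Causal S X ∧ Causal S (adjoint X)

/-- Diagonal with respect to the standard basis `χ_t`. -/
def IsDiagonal (X : L2 T →L[ℂ] L2 T) : Prop :=
  ∀ t : T, ∃ a : ℂ, X (lp.single 2 t 1) = a • lp.single 2 t 1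

/-- A pair of words of `F_q` is irreducible if it is not of the form
`(αᵢ v₁, αᵢ v₂)`. -/
def Irred {q : ℕ} (w₁ w₂ : List (Fin q)) : Prop :=
  ¬ ∃ (i : Fin q) (v₁ v₂ : List (Fin q)), w₁ = i :: v₁ ∧ w₂ = i :: v₂

/-- Membership in the Hilbert--Schmidt class: `trace (X*X) = Σ_t ‖X χ_t‖² < ∞`. -/
def HSSummable (X : L2 T →L[ℂ] L2 T) : Prop :=
  Summable fun t : T => ‖X (lp.single 2 t 1)‖ ^ 2

/-- The Hilbert--Schmidt norm `‖X‖₂ = (trace (X*X))^{1/2}`. -/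
def hsNorm (X : L2 T →L[ℂ] L2 T) : ℝ :=
  Real.sqrt (∑' t : T, ‖X (lp.single 2 t 1)‖ ^ 2)

/-- The Hilbert--Schmidt inner product `⟨X, Y⟩₂ = trace (Y* X)`
(linear in `X`, conjugate-linear in `Y`). -/
def hsInner (X Y : L2 T →L[ℂ] L2 T) : ℂ :=
  ∑' t : T, ⟪Y (lp.single 2 t 1), X (lp.single 2 t 1)⟫_ℂ


/-! ### Auxiliary lemmas -/

namespace HomTree

variable (S : HomTree q T)

theorem iterate_inj {x : T} {m n : ℕ} (h : S.parent^[m] x = S.parent^[n] x) : m = n := by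
  rcases le_total m n with hle | hle
  · have h2 : S.parent^[n - m + m] x = S.parent^[m] x := by
      rw [Nat.sub_add_cancel hle, h]
    rw [Function.iterate_add_apply] at h2
    have := S.acyclic _ _ h2
    omega
  · have h2 : S.parent^[m - n + n] x = S.parent^[n] x := by
      rw [Nat.sub_add_cancel hle, ← h]
    rw [Function.iterate_add_apply] at h2
    have := S.acyclic _ _ h2
    omega

theorem act_parent (w : List (Fin q)) (s : T) : S.parent^[w.length] (S.act w s) = s := by
  induction w generalizing s with
  | nil => rfl
  | cons i w ih =>
    rw [List.length_cons, Function.iterate_succ_apply',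
      show S.act (i :: w) s = S.act w (S.shift i s) from rfl, ih, S.parent_shift]

theorem act_inj {w : List (Fin q)} {s s' : T} (h : S.act w s = S.act w s') : s = s' := by
  have := congrArg (S.parent^[w.length]) h
  rwa [S.act_parent, S.act_parent] at this

theorem act_len {w w' : List (Fin q)} {s : T} (h : S.act w s = S.act w' s) :
    w.length = w'.length := by
  apply S.iterate_inj (x := S.act w s)
  rw [S.act_parent]
  conv_rhs => rw [h]
  rw [S.act_parent]

theorem act_word_inj (w w' : List (Fin q)) (s : T) (h : S.act w s = S.act w' s) :
    w = w' := by
  induction w generalizing w' s with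
  | nil =>
    cases w' with
    | nil => rfl
    | cons i' w' => exact absurd (S.act_len h) (by simp)
  | cons i w ih =>
    cases w' with
    | nil => exact absurd (S.act_len h) (by simp)
    | cons i' w' =>
      have hl : w.length = w'.length := by
        have := S.act_len h; simpa using this
      have h1 : S.parent^[w.length] (S.act (i :: w) s) = S.shift i s := S.act_parent w _
      have h2 : S.parent^[w'.length] (S.act (i' :: w') s) = S.shift i' s := S.act_parent w' _
      rw [← h, ← hl, h1] at h2
      obtain ⟨hi, -⟩ := S.shift_inj _ _ _ _ h2
      subst hi
      have h3 : S.act w (S.shift i s) = S.act w' (S.shift i s) := h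
      rw [ih w' _ h3]

/-- The meet lemma: if `t = s·w₁` and `r = s·w₂` with `(w₁, w₂)` irreducible, then `s`
is the closest common ancestor of `r` and `t`, and every common ancestor identity
`parent^[m] r = parent^[n] t` has `m = |w₂| + k`, `n = |w₁| + k`. -/
theorem meet {w₁ w₂ : List (Fin q)} {s t r : T} (hirr : Irred w₁ w₂)
    (ht : S.act w₁ s = t) (hr : S.act w₂ s = r) {m n : ℕ}
    (h : S.parent^[m] r = S.parent^[n] t) :
    ∃ k, m = w₂.length + k ∧ n = w₁.length + k := by
  have hs2 : S.parent^[w₂.length] r = s := by rw [← hr]; exact S.act_parent _ _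
  have hs1 : S.parent^[w₁.length] t = s := by rw [← ht]; exact S.act_parent _ _
  by_cases hm : w₂.length ≤ m
  · obtain ⟨a, rfl⟩ : ∃ a, m = a + w₂.length := ⟨m - w₂.length, by omega⟩
    have e1 : S.parent^[a + w₁.length] t = S.parent^[n] t := by
      rw [Function.iterate_add_apply, hs1, ← hs2, ← Function.iterate_add_apply, h]
    have := S.iterate_inj e1
    exact ⟨a, by omega, by omega⟩
  · exfalso
    push_neg at hm
    obtain ⟨d, hd⟩ : ∃ d, w₂.length = (d + 1) + m := ⟨w₂.length - m - 1, by omega⟩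
    have e0 : S.parent^[(d + 1) + m] r = S.parent^[(d + 1) + n] t := by
      rw [Function.iterate_add_apply S.parent (d + 1) m, h, ← Function.iterate_add_apply]
    have e1 : S.parent^[n + (d + 1)] t = s := by
      rw [Nat.add_comm n (d + 1), ← e0, ← hd, hs2]
    have e2 : w₁.length = n + (d + 1) := S.iterate_inj (hs1.trans e1.symm)
    cases w₁ with
    | nil => simp only [List.length_nil] at e2; omega
    | cons i₁ v₁ =>
      cases w₂ with
      | nil => simp only [List.length_nil] at hd; omega
      | cons i₂ v₂ =>
        have hv₂ : S.parent^[v₂.length] r = S.shift i₂ s := by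
          rw [← hr]; exact S.act_parent v₂ _
        have hv₁ : S.parent^[v₁.length] t = S.shift i₁ s := by
          rw [← ht]; exact S.act_parent v₁ _
        have hl₂ : v₂.length = d + m := by simp at hd; omega
        have hl₁ : v₁.length = d + n := by simp at e2; omega
        have key : S.parent^[v₂.length] r = S.parent^[v₁.length] t := by
          rw [hl₂, hl₁, Function.iterate_add_apply S.parent d m, h,
            ← Function.iterate_add_apply]
        rw [hv₂, hv₁] at key
        obtain ⟨hi, -⟩ := S.shift_inj _ _ _ _ key
        exact hirr ⟨i₂, v₁, v₂, by rw [hi], rfl⟩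

theorem ple_refl (t : T) : S.ple t t := ⟨0, 0, le_refl _, rfl⟩

theorem ple_trans {a b c : T} (h1 : S.ple a b) (h2 : S.ple b c) : S.ple a c := by
  obtain ⟨m, n, hmn, h⟩ := h1
  obtain ⟨m', n', hmn', h'⟩ := h2
  refine ⟨m' + m, n + n', by omega, ?_⟩
  rw [Function.iterate_add_apply, h, ← Function.iterate_add_apply,
    Nat.add_comm m' n, Function.iterate_add_apply, h', ← Function.iterate_add_apply]

theorem ple_of_le {w₁ w₂ : List (Fin q)} {s : T} (h : w₂.length ≤ w₁.length) :
    S.ple (S.act w₂ s) (S.act w₁ s) :=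
  ⟨w₂.length, w₁.length, h, by rw [S.act_parent, S.act_parent]⟩

theorem not_ple {w₁ w₂ : List (Fin q)} {s : T} (hirr : Irred w₁ w₂)
    (h : w₁.length < w₂.length) : ¬ S.ple (S.act w₂ s) (S.act w₁ s) := by
  rintro ⟨m, n, hmn, hp⟩
  obtain ⟨k, hk1, hk2⟩ := S.meet hirr rfl rfl hp
  omega

theorem pair_unique {w₁ w₂ w₁' w₂' : List (Fin q)} {s s' t r : T}
    (hirr : Irred w₁ w₂) (hirr' : Irred w₁' w₂')
    (ht : S.act w₁ s = t) (hr : S.act w₂ s = r)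
    (ht' : S.act w₁' s' = t) (hr' : S.act w₂' s' = r) :
    w₁ = w₁' ∧ w₂ = w₂' ∧ s = s' := by
  have h1 : S.parent^[w₂'.length] r = S.parent^[w₁'.length] t := by
    rw [← hr', ← ht', S.act_parent, S.act_parent]
  obtain ⟨k, hk1, hk2⟩ := S.meet hirr ht hr h1
  have h2 : S.parent^[w₂.length] r = S.parent^[w₁.length] t := by
    rw [← hr, ← ht, S.act_parent, S.act_parent]
  obtain ⟨k', hk1', hk2'⟩ := S.meet hirr' ht' hr' h2
  have hk0 : k = 0 := by omega
  have hss : s = s' := by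
    have e1 : S.parent^[w₂.length] r = s := by rw [← hr]; exact S.act_parent _ _
    have e2 : S.parent^[w₂'.length] r = s' := by rw [← hr']; exact S.act_parent _ _
    rw [← e1, ← e2, hk1, hk0, Nat.add_zero]
  exact ⟨S.act_word_inj _ _ s (by rw [ht, hss, ht']),
    S.act_word_inj _ _ s (by rw [hr, hss, hr']), hss⟩

end HomTree

section OpLemmas

variable (S : HomTree q T) {A : Fin q → (L2 T →L[ℂ] L2 T)}

theorem wordOp_apply (hA : ∀ (j : Fin q) (f : L2 T) (t : T), A j f t = f (S.shift j t))
    (w : List (Fin q)) (f : L2 T) (t : T) : wordOp A w f t = f (S.act w t) := by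
  induction w generalizing t with
  | nil => rfl
  | cons i w ih =>
    show (A i ∘L wordOp A w) f t = _
    rw [ContinuousLinearMap.comp_apply, hA, ih]
    rfl

theorem wordOp_single (hA : ∀ (j : Fin q) (f : L2 T) (t : T), A j f t = f (S.shift j t))
    {w : List (Fin q)} {s r : T} (hs : S.act w s = r) :
    wordOp A w (lp.single 2 r 1) = lp.single 2 s (1 : ℂ) := by
  apply lp.ext; funext u
  rw [wordOp_apply S hA]
  by_cases h : u = s
  · subst h; rw [hs, lp.single_apply_self, lp.single_apply_self]
  · rw [lp.single_apply_ne 2 s 1 h,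
      lp.single_apply_ne 2 r 1 (fun hc => h (S.act_inj (hc.trans hs.symm)))]

theorem wordOp_single_zero (hA : ∀ (j : Fin q) (f : L2 T) (t : T), A j f t = f (S.shift j t))
    {w : List (Fin q)} {r : T} (h : ¬ ∃ s, S.act w s = r) :
    wordOp A w (lp.single 2 r 1) = 0 := by
  apply lp.ext; funext u
  rw [wordOp_apply S hA, lp.single_apply_ne 2 r 1 (fun hc => h ⟨u, hc⟩)]
  rfl

theorem adjoint_wordOp_single
    (hA : ∀ (j : Fin q) (f : L2 T) (t : T), A j f t = f (S.shift j t))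
    (w : List (Fin q)) (s : T) :
    adjoint (wordOp A w) (lp.single 2 s 1) = lp.single 2 (S.act w s) (1 : ℂ) := by
  apply ext_inner_right ℂ
  intro g
  rw [ContinuousLinearMap.adjoint_inner_left, lp.inner_single_left, lp.inner_single_left,
    wordOp_apply S hA]

theorem coord_eq_inner (f : L2 T) (t : T) : f t = ⟪lp.single 2 t (1 : ℂ), f⟫_ℂ := by
  rw [lp.inner_single_left, RCLike.inner_apply, map_one, mul_one]

end OpLemmas


set_option maxHeartbeats 2000000
set_option synthInstance.maxHeartbeats 1000000

theorem term_eval (S : HomTree q T) {A : Fin q → (L2 T →L[ℂ] L2 T)}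
    (hA : ∀ (j : Fin q) (f : L2 T) (t : T), A j f t = f (S.shift j t))
    (Sc : List (Fin q) → List (Fin q) → (L2 T →L[ℂ] L2 T))
    (hdiag : ∀ w₁ w₂, IsDiagonal (Sc w₁ w₂))
    (hnormal : ∀ w₁ w₂ (r : T), (¬ ∃ s, S.act w₂ s = r) →
      Sc w₁ w₂ (lp.single 2 r 1) = 0)
    (r t : T) (w₁ w₂ : List (Fin q))
    (h : adjoint (wordOp A w₁) (wordOp A w₂ (Sc w₁ w₂ (lp.single 2 r 1))) t ≠ 0) :
    ∃ s a, S.act w₂ s = r ∧ S.act w₁ s = t ∧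
      Sc w₁ w₂ (lp.single 2 r 1) = a • lp.single 2 r 1 ∧
      adjoint (wordOp A w₁) (wordOp A w₂ (Sc w₁ w₂ (lp.single 2 r 1))) t = a := by
  by_cases hex : ∃ s, S.act w₂ s = r
  · obtain ⟨s, hs⟩ := hex
    obtain ⟨a, ha⟩ := hdiag w₁ w₂ r
    have e : adjoint (wordOp A w₁) (wordOp A w₂ (Sc w₁ w₂ (lp.single 2 r 1))) =
        a • lp.single 2 (S.act w₁ s) (1 : ℂ) := by
      rw [ha, map_smul, wordOp_single S hA hs, map_smul, adjoint_wordOp_single S hA]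
    by_cases hts : t = S.act w₁ s
    · refine ⟨s, a, hs, hts.symm, ha, ?_⟩
      rw [e, lp.coeFn_smul, Pi.smul_apply, hts, lp.single_apply_self, smul_eq_mul, mul_one]
    · exact absurd (by
        rw [e, lp.coeFn_smul, Pi.smul_apply, lp.single_apply_ne 2 _ 1 hts, smul_zero]) h
  · exact absurd (by rw [hnormal w₁ w₂ r hex, map_zero, map_zero]; rfl) h

/-- Let `X ∈ B(ℓ²(T))` admit a pointwise absolutely convergent
representation `X = Σ′ w₁* w₂ S_{w₁,w₂}` over irreducible pairs of words, with
diagonal coefficients normalized so that `S_{w₁,w₂} χ_r = 0` for `r ∉ T·w₂`.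
Then `X` is causal if and only if `S_{w₁,w₂} = 0` whenever `|w₁| < |w₂|`. -/
theorem causal_iff_lower_coefficients_vanish {q : ℕ} (hq : 1 ≤ q)
    {T : Type} [DecidableEq T]
    (S : HomTree q T) (A : Fin q → (L2 T →L[ℂ] L2 T))
    (hA : ∀ (j : Fin q) (f : L2 T) (t : T), A j f t = f (S.shift j t))
    (X : L2 T →L[ℂ] L2 T)
    (Sc : List (Fin q) → List (Fin q) → (L2 T →L[ℂ] L2 T))
    (hdiag : ∀ w₁ w₂, IsDiagonal (Sc w₁ w₂))
    (hnormal : ∀ w₁ w₂ (r : T), (¬ ∃ s, S.act w₂ s = r) →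
      Sc w₁ w₂ (lp.single 2 r 1) = 0)
    (habs : ∀ (f : L2 T) (t : T),
      Summable fun p : {p : List (Fin q) × List (Fin q) // Irred p.1 p.2} =>
        ‖adjoint (wordOp A p.1.1) (wordOp A p.1.2 (Sc p.1.1 p.1.2 f)) t‖)
    (hrep : ∀ (f : L2 T) (t : T),
      HasSum (fun p : {p : List (Fin q) × List (Fin q) // Irred p.1 p.2} =>
        adjoint (wordOp A p.1.1) (wordOp A p.1.2 (Sc p.1.1 p.1.2 f)) t) (X f t)) :
    Causal S X ↔
      ∀ w₁ w₂, Irred w₁ w₂ → w₁.length < w₂.length → Sc w₁ w₂ = 0 := by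
  have two_ne : (2 : ℝ≥0∞) ≠ ⊤ := ENNReal.ofNat_ne_top
  constructor
  · intro hC w₁ w₂ hirr hlen
    have hsingle : ∀ r : T, Sc w₁ w₂ (lp.single 2 r 1) = 0 := by
      intro r
      by_cases hex : ∃ s, S.act w₂ s = r
      · obtain ⟨s, hs⟩ := hex
        obtain ⟨a, ha⟩ := hdiag w₁ w₂ r
        have hnple : ¬ S.ple r (S.act w₁ s) := by
          rw [← hs]; exact S.not_ple hirr hlen
        have hXzero : X (lp.single 2 r 1) (S.act w₁ s) = 0 := by
          refine hC (S.act w₁ s) (lp.single 2 r 1) ?_ (S.act w₁ s) (S.ple_refl _)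
          intro u hu
          rcases eq_or_ne u r with rfl | hne
          · exact absurd hu hnple
          · exact lp.single_apply_ne 2 r 1 hne
        have h1 := hrep (lp.single 2 r 1) (S.act w₁ s)
        set p₀ : {p : List (Fin q) × List (Fin q) // Irred p.1 p.2} := ⟨(w₁, w₂), hirr⟩
          with hp₀
        have h2 : HasSum (fun p : {p : List (Fin q) × List (Fin q) // Irred p.1 p.2} =>
            adjoint (wordOp A p.1.1) (wordOp A p.1.2 (Sc p.1.1 p.1.2 (lp.single 2 r 1)))
              (S.act w₁ s))
            (adjoint (wordOp A p₀.1.1) (wordOp A p₀.1.2 (Sc p₀.1.1 p₀.1.2 (lp.single 2 r 1)))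
              (S.act w₁ s)) := by
          refine hasSum_single p₀ ?_
          rintro ⟨⟨u₁, u₂⟩, hirrp⟩ hp
          by_contra hne
          obtain ⟨s', a', hs', ht', -, -⟩ :=
            term_eval S hA Sc hdiag hnormal r (S.act w₁ s) u₁ u₂ hne
          obtain ⟨e1, e2, -⟩ := S.pair_unique hirrp hirr ht' hs' rfl hs
          exact hp (Subtype.ext (by simp only [hp₀]; exact Prod.ext e1 e2))
        have hterm0 : adjoint (wordOp A w₁) (wordOp A w₂ (Sc w₁ w₂ (lp.single 2 r 1)))
            (S.act w₁ s) = 0 := (h1.unique h2).symm.trans hXzero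
        rw [ha, map_smul, wordOp_single S hA hs, map_smul, adjoint_wordOp_single S hA,
          lp.coeFn_smul, Pi.smul_apply, lp.single_apply_self, smul_eq_mul, mul_one] at hterm0
        rw [ha, hterm0, zero_smul]
      · exact hnormal w₁ w₂ r hex
    refine ContinuousLinearMap.ext fun f => ?_
    have hf := lp.hasSum_single two_ne f
    have h2 := (Sc w₁ w₂).hasSum hf
    have h3 : ∀ r : T, Sc w₁ w₂ (lp.single 2 r (f r)) = 0 := by
      intro r
      have hx : (lp.single 2 r (f r) : L2 T) = f r • lp.single 2 r 1 := by
        rw [← lp.single_smul, smul_eq_mul, mul_one]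
      rw [hx, map_smul, hsingle r, smul_zero]
    simp only [h3] at h2
    simpa using h2.unique hasSum_zero
  · intro hvanish
    have hmat : ∀ r t : T, ¬ S.ple r t → X (lp.single 2 r 1) t = 0 := by
      intro r t hrt
      have h1 := hrep (lp.single 2 r 1) t
      have h0 : ∀ p : {p : List (Fin q) × List (Fin q) // Irred p.1 p.2},
          adjoint (wordOp A p.1.1) (wordOp A p.1.2 (Sc p.1.1 p.1.2 (lp.single 2 r 1))) t
            = 0 := by
        rintro ⟨⟨u₁, u₂⟩, hirrp⟩
        by_contra hne
        obtain ⟨s', a', hs', ht', ha', -⟩ := term_eval S hA Sc hdiag hnormal r t u₁ u₂ hne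
        by_cases hl : u₁.length < u₂.length
        · exact hne (by
            rw [hvanish u₁ u₂ hirrp hl, ContinuousLinearMap.zero_apply, map_zero, map_zero]
            rfl)
        · exact hrt (by rw [← hs', ← ht']; exact S.ple_of_le (by omega))
      simp only [h0] at h1
      exact h1.unique hasSum_zero
    intro s f hf t ht
    have hsum := lp.hasSum_single two_ne f
    have h2 : HasSum (fun r : T => X (lp.single 2 r (f r))) (X f) := X.hasSum hsum
    have h3 := (innerSL ℂ (lp.single 2 t (1 : ℂ))).hasSum h2
    have hterm0 : ∀ r : T, ⟪lp.single 2 t (1 : ℂ), X (lp.single 2 r (f r))⟫_ℂ = 0 := by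
      intro r
      have hx : (lp.single 2 r (f r) : L2 T) = f r • lp.single 2 r 1 := by
        rw [← lp.single_smul, smul_eq_mul, mul_one]
      rw [hx, map_smul, inner_smul_right, ← coord_eq_inner]
      by_cases hr : S.ple r s
      · rw [hf r hr, zero_mul]
      · rw [hmat r t (fun hc => hr (S.ple_trans hc ht)), mul_zero]
    have h3' : HasSum (fun _ : T => (0 : ℂ)) ⟪lp.single 2 t (1 : ℂ), X f⟫_ℂ := by
      simpa only [innerSL_apply_apply, hterm0] using h3
    have h4 : ⟪lp.single 2 t (1 : ℂ), X f⟫_ℂ = 0 := (h3'.unique hasSum_zero).symm.symm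
    rw [coord_eq_inner (X f) t]
    exact h4
end Multiscale
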